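/- Covering lemma for list-recovery balls: for q ≥ 2, 1 ≤ ℓ ≤ q−1, w ∈ (0,1) with nw an integer and 1 ≤ nw ≤ n−1, there exist K tuples of input lists Y^{(1)},...,Y^{(K)} ∈ (ℓ-subsets of [q])^n whose list-recovery balls of radius nw cover [q]^n, with K ≤ n·ln(q)·√(8nw(1−w))·q^{n(1 − H_{q,ℓ}(w))} + 1. -/

import Mathlib

open Finset

/-! ### Auxiliary lemmas for the binomial coefficient lower bound -/

private lemma stirling_lb (k : ℕ) (hk : 1 ≤ k) :
    Real.sqrt Real.pi ≤ Stirling.stirlingSeq k := by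
  obtain ⟨j, rfl⟩ := Nat.exists_eq_add_of_le hk
  have htend : Filter.Tendsto (Stirling.stirlingSeq ∘ Nat.succ) Filter.atTop
      (nhds (Real.sqrt Real.pi)) := by
    exact Stirling.tendsto_stirlingSeq_sqrt_pi.comp (Filter.tendsto_add_atTop_nat 1)
  have h := Stirling.stirlingSeq'_antitone.le_of_tendsto htend j
  rw [show 1 + j = j + 1 by omega]
  simpa [Function.comp] using h

private lemma stirling_ub (k : ℕ) (hk : 2 ≤ k) :
    Stirling.stirlingSeq k ≤ Real.exp 1 ^ 2 / 4 := by
  have h2 : Stirling.stirlingSeq 2 = Real.exp 1 ^ 2 / 4 := by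
    unfold Stirling.stirlingSeq
    have : Real.sqrt (2 * (2 : ℕ)) = 2 := by
      rw [show (2 * ((2:ℕ):ℝ)) = 2 ^ 2 by norm_num, Real.sqrt_sq (by norm_num)]
    rw [this]
    have he : Real.exp 1 > 0 := Real.exp_pos 1
    field_simp
    ring
  obtain ⟨j, rfl⟩ := Nat.exists_eq_add_of_le hk
  calc Stirling.stirlingSeq (2 + j) ≤ Stirling.stirlingSeq 2 := by
        have h := Stirling.stirlingSeq'_antitone (a := 1) (b := 1 + j) (by omega)
        rw [show 2 + j = 1 + j + 1 by omega]
        simpa [Function.comp] using h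
    _ = Real.exp 1 ^ 2 / 4 := h2

/-- `(b+1)^(2b+1) ≤ 8 * b^(2b+1)` for `b ≥ 1`, i.e. `(1+1/b)^(2b+1) ≤ 8`. -/
private lemma pow_ineq (b : ℕ) (hb : 1 ≤ b) :
    ((b : ℝ) + 1) ^ (2 * b + 1) ≤ 8 * (b : ℝ) ^ (2 * b + 1) := by
  rcases le_or_gt b 12 with hb12 | hb12
  · have : (b + 1) ^ (2 * b + 1) ≤ 8 * b ^ (2 * b + 1) := by
      interval_cases b <;> norm_num
    calc ((b : ℝ) + 1) ^ (2 * b + 1) = ((b + 1 : ℕ) : ℝ) ^ (2 * b + 1) := by push_cast; ring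
      _ ≤ ((8 * b ^ (2 * b + 1) : ℕ) : ℝ) := by
          exact_mod_cast Nat.cast_le.mpr (by exact_mod_cast this)
      _ = 8 * (b : ℝ) ^ (2 * b + 1) := by push_cast; ring
  · have hbpos : (0 : ℝ) < b := by positivity
    have h1 : (b : ℝ) + 1 ≤ (b : ℝ) * Real.exp (1 / b) := by
      have := Real.add_one_le_exp (1 / (b : ℝ))
      calc (b : ℝ) + 1 = (b : ℝ) * (1 / b + 1) := by field_simp; ring
        _ ≤ (b : ℝ) * Real.exp (1 / b) := by
            exact mul_le_mul_of_nonneg_left this hbpos.le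
    have h2 : ((b : ℝ) + 1) ^ (2 * b + 1) ≤
        (b : ℝ) ^ (2 * b + 1) * Real.exp (1 / b) ^ (2 * b + 1) := by
      calc ((b : ℝ) + 1) ^ (2 * b + 1) ≤ ((b : ℝ) * Real.exp (1 / b)) ^ (2 * b + 1) :=
            pow_le_pow_left₀ (by positivity) h1 _
        _ = (b : ℝ) ^ (2 * b + 1) * Real.exp (1 / b) ^ (2 * b + 1) := mul_pow _ _ _
    have h3 : Real.exp (1 / b) ^ (2 * b + 1) ≤ 8 := by
      rw [← Real.exp_nat_mul]
      have harg : ((2 * b + 1 : ℕ) : ℝ) * (1 / b) ≤ 2 + 1 / 13 := by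
        have hb13 : (13 : ℝ) ≤ b := by exact_mod_cast hb12
        push_cast
        rw [mul_one_div, div_le_iff₀ hbpos]
        nlinarith
      have hlog : (2 : ℝ) + 1 / 13 ≤ Real.log 8 := by
        have h8 : (8 : ℝ) = 2 ^ (3 : ℕ) := by norm_num
        rw [h8, Real.log_pow]
        have := Real.log_two_gt_d9
        push_cast
        nlinarith
      calc Real.exp (((2 * b + 1 : ℕ) : ℝ) * (1 / b)) ≤ Real.exp (Real.log 8) :=
            Real.exp_le_exp.mpr (harg.trans hlog)
        _ = 8 := Real.exp_log (by norm_num)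
    calc ((b : ℝ) + 1) ^ (2 * b + 1) ≤ (b : ℝ) ^ (2 * b + 1) * Real.exp (1 / b) ^ (2 * b + 1) := h2
      _ ≤ (b : ℝ) ^ (2 * b + 1) * 8 := by
          exact mul_le_mul_of_nonneg_left h3 (by positivity)
      _ = 8 * (b : ℝ) ^ (2 * b + 1) := by ring

/-- The case `a = 1` of the key binomial bound. -/
private lemma binom_key_one (b : ℕ) (hb : 1 ≤ b) :
    ((1 : ℝ) + b) ^ (1 + b) ≤
      Real.sqrt (8 * 1 * b / (1 + b)) * ((1 + b).choose 1) * 1 ^ 1 * (b : ℝ) ^ b := by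
  have hbpos : (0 : ℝ) < b := by positivity
  have h1b : (0 : ℝ) < 1 + b := by positivity
  have hch : ((1 + b).choose 1 : ℝ) = 1 + (b : ℝ) := by
    rw [Nat.choose_one_right]; push_cast; ring
  rw [hch, one_pow, mul_one]
  -- goal : (1+b)^(1+b) ≤ √(8*1*b/(1+b)) * (1+b) * b^b
  -- suffices : (1+b)^b ≤ √(8b/(1+b)) * b^b
  have key : ((1 : ℝ) + b) ^ b ≤ Real.sqrt (8 * 1 * b / (1 + b)) * (b : ℝ) ^ b := by
    have hsq : (((1 : ℝ) + b) ^ b) ^ 2 ≤ (8 * 1 * b / (1 + b)) * ((b : ℝ) ^ b) ^ 2 := by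
      rw [div_mul_eq_mul_div, le_div_iff₀ h1b]
      have := pow_ineq b hb
      have h2 : (((1:ℝ) + b) ^ b) ^ 2 * (1 + b) = ((b:ℝ) + 1) ^ (2 * b + 1) := by
        rw [← pow_mul, show 2 * b + 1 = b * 2 + 1 by ring, pow_succ]
        ring
      have h3 : 8 * 1 * (b:ℝ) * ((b:ℝ) ^ b) ^ 2 = 8 * (b : ℝ) ^ (2 * b + 1) := by
        rw [← pow_mul, show 2 * b + 1 = b * 2 + 1 by ring, pow_succ]
        ring
      rw [h2, h3]
      linarith [pow_ineq b hb]
    have hs : ((1 : ℝ) + b) ^ b ≤ Real.sqrt ((8 * 1 * b / (1 + b)) * ((b : ℝ) ^ b) ^ 2) :=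
      Real.le_sqrt_of_sq_le hsq
    calc ((1 : ℝ) + b) ^ b ≤ Real.sqrt ((8 * 1 * b / (1 + b)) * ((b : ℝ) ^ b) ^ 2) := hs
      _ = Real.sqrt (8 * 1 * b / (1 + b)) * (b : ℝ) ^ b := by
          rw [Real.sqrt_mul (by positivity)]
          rw [Real.sqrt_sq (by positivity)]
  calc ((1 : ℝ) + b) ^ (1 + b) = (1 + (b : ℝ)) * ((1 : ℝ) + b) ^ b := by
        rw [pow_add, pow_one]
    _ ≤ (1 + (b : ℝ)) * (Real.sqrt (8 * 1 * b / (1 + b)) * (b : ℝ) ^ b) := by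
        exact mul_le_mul_of_nonneg_left key (by positivity)
    _ = Real.sqrt (8 * 1 * b / (1 + b)) * (1 + (b : ℝ)) * (b : ℝ) ^ b := by ring

/-- Key binomial lower bound:
`(a+b)^(a+b) ≤ √(8ab/(a+b)) * C(a+b,a) * a^a * b^b` for `a, b ≥ 1`. -/
private lemma binom_key (a b : ℕ) (ha : 1 ≤ a) (hb : 1 ≤ b) :
    ((a : ℝ) + b) ^ (a + b) ≤
      Real.sqrt (8 * a * b / (a + b)) * ((a + b).choose a) * (a : ℝ) ^ a * (b : ℝ) ^ b := by
  rcases eq_or_lt_of_le ha with ha1 | ha2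
  · -- a = 1
    subst ha1
    have h := binom_key_one b hb
    calc (((1:ℕ):ℝ) + b) ^ (1 + b) = ((1:ℝ) + b) ^ (1 + b) := by norm_num
      _ ≤ Real.sqrt (8 * 1 * b / (1 + b)) * ((1 + b).choose 1) * 1 ^ 1 * (b : ℝ) ^ b := h
      _ = Real.sqrt (8 * ((1:ℕ):ℝ) * b / (((1:ℕ):ℝ) + b)) * ((1 + b).choose 1) *
            (((1:ℕ):ℝ)) ^ 1 * (b : ℝ) ^ b := by norm_num
  rcases eq_or_lt_of_le hb with hb1 | hb2
  · -- b = 1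
    subst hb1
    have h := binom_key_one a ha
    have hc : ((1 + a).choose 1) = ((a + 1).choose a) := by
      have h' := Nat.choose_symm (n := a + 1) (k := 1) (by omega)
      simpa [Nat.add_comm] using h'.symm
    calc ((a:ℝ) + ((1:ℕ):ℝ)) ^ (a + 1) = ((1:ℝ) + a) ^ (1 + a) := by
          rw [Nat.add_comm a 1]; norm_num; ring
      _ ≤ Real.sqrt (8 * 1 * a / (1 + a)) * ((1 + a).choose 1) * 1 ^ 1 * (a : ℝ) ^ a := h
      _ = Real.sqrt (8 * (a:ℝ) * ((1:ℕ):ℝ) / ((a:ℝ) + ((1:ℕ):ℝ))) * ((a + 1).choose a) *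
            (a:ℝ) ^ a * (((1:ℕ):ℝ)) ^ 1 := by
          rw [show (8 * 1 * (a:ℝ) / (1 + (a:ℝ))) = 8 * (a:ℝ) * ((1:ℕ):ℝ) / ((a:ℝ) + ((1:ℕ):ℝ))
            by push_cast; ring, hc]
          push_cast
          ring
  -- now 2 ≤ a, 2 ≤ b
  have ha' : 2 ≤ a := ha2
  have hb' : 2 ≤ b := hb2
  rw [show ((a:ℝ) + b) = (((a + b : ℕ)):ℝ) by push_cast; ring]
  set n : ℕ := a + b with hn
  have hnn : 4 ≤ n := by omega
  set e : ℝ := Real.exp 1 with he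
  have hepos : (0:ℝ) < e := Real.exp_pos 1
  have hapos : (0:ℝ) < a := by positivity
  have hbpos : (0:ℝ) < b := by positivity
  have hnpos : (0:ℝ) < (n:ℝ) := by positivity
  set C : ℝ := ((n.choose a : ℕ) : ℝ) with hC
  have hCpos : 0 < C := by
    have : 0 < n.choose a := Nat.choose_pos (by omega)
    positivity
  -- Stirling bounds
  have hlow : Real.sqrt Real.pi * (Real.sqrt (2*(n:ℝ)) * ((n:ℝ)/e)^n) ≤ ((Nat.factorial n):ℝ) := by
    have h := stirling_lb n (by omega)
    have hden : (0:ℝ) < Real.sqrt (2*(n:ℝ)) * ((n:ℝ)/e)^n := by positivity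
    rw [Stirling.stirlingSeq] at h
    exact (le_div_iff₀ hden).mp h
  have hupa : ((Nat.factorial a):ℝ) ≤ (e^2/4) * (Real.sqrt (2*(a:ℝ)) * ((a:ℝ)/e)^a) := by
    have h := stirling_ub a (by omega)
    have hden : (0:ℝ) < Real.sqrt (2*(a:ℝ)) * ((a:ℝ)/e)^a := by positivity
    rw [Stirling.stirlingSeq] at h
    exact (div_le_iff₀ hden).mp h
  have hupb : ((Nat.factorial b):ℝ) ≤ (e^2/4) * (Real.sqrt (2*(b:ℝ)) * ((b:ℝ)/e)^b) := by
    have h := stirling_ub b (by omega)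
    have hden : (0:ℝ) < Real.sqrt (2*(b:ℝ)) * ((b:ℝ)/e)^b := by positivity
    rw [Stirling.stirlingSeq] at h
    exact (div_le_iff₀ hden).mp h
  have hfact : C * ((Nat.factorial a) : ℝ) * ((Nat.factorial b) : ℝ) = ((Nat.factorial n) : ℝ) := by
    have hnat := Nat.choose_mul_factorial_mul_factorial (Nat.le_add_right a b)
    rw [Nat.add_sub_cancel_left] at hnat
    rw [hC, hn]
    exact_mod_cast congrArg (Nat.cast : ℕ → ℝ) hnat
  have hchain : Real.sqrt Real.pi * (Real.sqrt (2*(n:ℝ)) * ((n:ℝ)/e)^n) ≤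
      C * ((e^2/4) * (Real.sqrt (2*(a:ℝ)) * ((a:ℝ)/e)^a)) *
        ((e^2/4) * (Real.sqrt (2*(b:ℝ)) * ((b:ℝ)/e)^b)) := by
    calc Real.sqrt Real.pi * (Real.sqrt (2*(n:ℝ)) * ((n:ℝ)/e)^n) ≤ ((Nat.factorial n) : ℝ) := hlow
      _ = C * ((Nat.factorial a) : ℝ) * ((Nat.factorial b) : ℝ) := hfact.symm
      _ ≤ _ := by
          have h1 : (0:ℝ) ≤ C := hCpos.le
          exact mul_le_mul (mul_le_mul_of_nonneg_left hupa h1) hupb (by positivity)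
            (by positivity)
  -- clear the powers of e
  set S : ℝ := Real.sqrt (2*(a:ℝ)) * Real.sqrt (2*(b:ℝ)) with hS
  have hSpos : 0 < S := by rw [hS]; positivity
  have H1 : Real.sqrt Real.pi * Real.sqrt (2*(n:ℝ)) * (n:ℝ)^n ≤
      C * (e^2/4)^2 * S * ((a:ℝ)^a * (b:ℝ)^b) := by
    have hmul := mul_le_mul_of_nonneg_right hchain (by positivity : (0:ℝ) ≤ e^n)
    have hea : e ^ n = e ^ a * e ^ b := by rw [hn, pow_add]
    have lhs_eq : Real.sqrt Real.pi * (Real.sqrt (2*(n:ℝ)) * ((n:ℝ)/e)^n) * e^n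
        = Real.sqrt Real.pi * Real.sqrt (2*(n:ℝ)) * (n:ℝ)^n := by
      rw [div_pow]
      field_simp
    have rhs_eq : C * ((e^2/4) * (Real.sqrt (2*(a:ℝ)) * ((a:ℝ)/e)^a)) *
        ((e^2/4) * (Real.sqrt (2*(b:ℝ)) * ((b:ℝ)/e)^b)) * e^n
        = C * (e^2/4)^2 * S * ((a:ℝ)^a * (b:ℝ)^b) := by
      rw [div_pow, div_pow, hea, hS]
      field_simp
    rw [lhs_eq, rhs_eq] at hmul
    exact hmul
  set d : ℝ := Real.sqrt (8*(a:ℝ)*b/(n:ℝ)) with hd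
  have hdnn : 0 ≤ d := Real.sqrt_nonneg _
  have hsqrt : d * Real.sqrt (2*(n:ℝ)) = 2 * S := by
    rw [hd, hS, ← Real.sqrt_mul (by positivity), ← Real.sqrt_mul (by positivity)]
    rw [show (8*(a:ℝ)*b/(n:ℝ))*(2*(n:ℝ)) = 2^2*((2*(a:ℝ))*(2*(b:ℝ))) by field_simp; ring]
    rw [Real.sqrt_mul (by positivity), Real.sqrt_sq (by norm_num)]
  have hpi : (e^2/4)^2 ≤ Real.sqrt Real.pi * 2 := by
    have h1 : e < 2.7182818286 := Real.exp_one_lt_d9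
    have hp : (3.141592 : ℝ) < Real.pi := Real.pi_gt_d6
    have h2 : e^2 ≤ 7.389057 := by nlinarith [hepos.le]
    have h2' : e^2/4 ≤ 7.389057/4 := by linarith
    have h3 : (e^2/4)^2 ≤ ((7.389057:ℝ)/4)^2 := pow_le_pow_left₀ (by positivity) h2' 2
    have hs : (1.75:ℝ) ≤ Real.sqrt Real.pi := by
      rw [Real.le_sqrt (by norm_num) Real.pi_pos.le]
      calc ((1.75:ℝ))^2 = 3.0625 := by norm_num
        _ ≤ Real.pi := by linarith
    have h4 : ((7.389057:ℝ)/4)^2 ≤ Real.sqrt Real.pi * 2 := by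
      calc ((7.389057:ℝ)/4)^2 ≤ 3.5 := by norm_num
        _ ≤ Real.sqrt Real.pi * 2 := by linarith
    exact h3.trans h4
  set P : ℝ := (a:ℝ)^a * (b:ℝ)^b with hP
  have hPpos : 0 < P := by rw [hP]; positivity
  have step1 : Real.sqrt Real.pi * 2 * S * (n:ℝ)^n ≤ (e^2/4)^2 * S * (d * C * P) := by
    have hmul := mul_le_mul_of_nonneg_left H1 hdnn
    have e1 : d * (Real.sqrt Real.pi * Real.sqrt (2*(n:ℝ)) * (n:ℝ)^n)
        = Real.sqrt Real.pi * 2 * S * (n:ℝ)^n := by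
      rw [show d * (Real.sqrt Real.pi * Real.sqrt (2*(n:ℝ)) * (n:ℝ)^n)
          = Real.sqrt Real.pi * (d * Real.sqrt (2*(n:ℝ))) * (n:ℝ)^n by ring, hsqrt]
      ring
    have e2 : d * (C * (e^2/4)^2 * S * P) = (e^2/4)^2 * S * (d * C * P) := by ring
    rw [e1, e2] at hmul
    exact hmul
  have step2 : (e^2/4)^2 * S * (d * C * P) ≤ Real.sqrt Real.pi * 2 * S * (d * C * P) := by
    have h1 : (e^2/4)^2 * S ≤ Real.sqrt Real.pi * 2 * S :=
      mul_le_mul_of_nonneg_right hpi hSpos.le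
    exact mul_le_mul_of_nonneg_right h1 (by positivity)
  have final : (Real.sqrt Real.pi * 2 * S) * (n:ℝ)^n ≤ (Real.sqrt Real.pi * 2 * S) * (d * C * P) := by
    calc (Real.sqrt Real.pi * 2 * S) * (n:ℝ)^n = Real.sqrt Real.pi * 2 * S * (n:ℝ)^n := by ring
      _ ≤ (e^2/4)^2 * S * (d * C * P) := step1
      _ ≤ Real.sqrt Real.pi * 2 * S * (d * C * P) := step2
  have hcancel : (n:ℝ)^n ≤ d * C * P := by
    have hpos : (0:ℝ) < Real.sqrt Real.pi * 2 * S := by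
      have : (0:ℝ) < Real.sqrt Real.pi := Real.sqrt_pos.mpr Real.pi_pos
      positivity
    exact le_of_mul_le_mul_left final hpos
  calc ((n:ℕ):ℝ)^n ≤ d * C * P := hcancel
    _ = Real.sqrt (8*(a:ℝ)*b/(n:ℝ)) * C * (a:ℝ)^a * (b:ℝ)^b := by rw [hd, hP]; ring

/-! ### Covering lemma -/

private lemma cover_lemma {Ω X : Type*} [Fintype X] [DecidableEq X]
    (A : Finset Ω) (G : X → Finset Ω) [DecidableEq Ω]
    (hGA : ∀ x, G x ⊆ A) (K B : ℕ) (hB : ∀ x, A.card - (G x).card ≤ B)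
    (hlt : Fintype.card X * B ^ K < A.card ^ K) :
    ∃ f : Fin K → Ω, (∀ k, f k ∈ A) ∧ ∀ x, ∃ k, f k ∈ G x := by
  classical
  set F : Finset (Fin K → Ω) := Fintype.piFinset (fun _ => A) with hF
  set bad : Finset (Fin K → Ω) :=
    Finset.univ.biUnion (fun x : X => Fintype.piFinset (fun _ => A \ G x)) with hbad
  have hFcard : F.card = A.card ^ K := by
    rw [hF, Fintype.card_piFinset]
    simp
  have hbadcard : bad.card ≤ Fintype.card X * B ^ K := by
    calc bad.card ≤ ∑ x : X, (Fintype.piFinset (fun _ : Fin K => A \ G x)).card :=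
          Finset.card_biUnion_le
      _ ≤ ∑ _x : X, B ^ K := by
          apply Finset.sum_le_sum
          intro x _
          rw [Fintype.card_piFinset]
          simp only [Finset.prod_const, Finset.card_univ, Fintype.card_fin]
          exact Nat.pow_le_pow_left (by rw [Finset.card_sdiff_of_subset (hGA x)]; exact hB x) K
      _ = Fintype.card X * B ^ K := by simp [mul_comm]
  have hcard : bad.card < F.card := by
    rw [hFcard]; exact lt_of_le_of_lt hbadcard hlt
  have hns : ¬ F ⊆ bad := fun hsub => absurd (Finset.card_le_card hsub) (not_le.mpr hcard)
  obtain ⟨f, hfF, hfbad⟩ := Finset.not_subset.mp hns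
  have hfA : ∀ k, f k ∈ A := by
    intro k
    exact Fintype.mem_piFinset.mp hfF k
  refine ⟨f, hfA, fun x => ?_⟩
  by_contra hnone
  push_neg at hnone
  apply hfbad
  rw [hbad, Finset.mem_biUnion]
  refine ⟨x, Finset.mem_univ x, ?_⟩
  rw [Fintype.mem_piFinset]
  intro k
  rw [Finset.mem_sdiff]
  exact ⟨hfA k, hnone k⟩

/-! ### Counting lemmas for list-recovery balls -/

private lemma count_avoid (q ℓ : ℕ) (a : Fin q) :
    (((Finset.univ : Finset (Fin q)).powersetCard ℓ).filter (fun s => a ∉ s)).card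
      = (q - 1).choose ℓ := by
  have hset : ((Finset.univ : Finset (Fin q)).powersetCard ℓ).filter (fun s => a ∉ s)
      = ((Finset.univ : Finset (Fin q)).erase a).powersetCard ℓ := by
    ext s
    simp only [Finset.mem_filter, Finset.mem_powersetCard, Finset.subset_erase]
    tauto
  rw [hset, Finset.card_powersetCard, Finset.card_erase_of_mem (Finset.mem_univ a),
    Finset.card_univ, Fintype.card_fin]

private lemma count_mem (q ℓ : ℕ) (hq : 1 ≤ q) (hl : 1 ≤ ℓ) (a : Fin q) :
    (((Finset.univ : Finset (Fin q)).powersetCard ℓ).filter (fun s => a ∈ s)).card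
      = (q - 1).choose (ℓ - 1) := by
  have htot := Finset.card_filter_add_card_filter_not
    (s := (Finset.univ : Finset (Fin q)).powersetCard ℓ) (p := fun s => a ∈ s)
  have h1 : ((Finset.univ : Finset (Fin q)).powersetCard ℓ).card = q.choose ℓ := by
    rw [Finset.card_powersetCard, Finset.card_univ, Fintype.card_fin]
  have h2 : (((Finset.univ : Finset (Fin q)).powersetCard ℓ).filter (fun s => ¬ a ∈ s)).card
      = (q - 1).choose ℓ := count_avoid q ℓ a
  have hpascal : q.choose ℓ = (q - 1).choose (ℓ - 1) + (q - 1).choose ℓ := by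
    obtain ⟨q', rfl⟩ := Nat.exists_eq_add_of_le hq
    obtain ⟨ℓ', rfl⟩ := Nat.exists_eq_add_of_le hl
    simp only [Nat.add_sub_cancel_left]
    rw [Nat.add_comm 1 q', Nat.add_comm 1 ℓ']
    exact Nat.choose_succ_succ q' ℓ'
  omega

private lemma gcount (q ℓ n m : ℕ) (hq : 1 ≤ q) (hl : 1 ≤ ℓ) (hm : m ≤ n)
    (x : Fin n → Fin q) :
    n.choose m * ((q - 1).choose ℓ) ^ m * ((q - 1).choose (ℓ - 1)) ^ (n - m) ≤
      ((Fintype.piFinset (fun _ : Fin n => (Finset.univ : Finset (Fin q)).powersetCard ℓ)).filter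
        (fun Y => (Finset.univ.filter fun i => x i ∉ Y i).card ≤ m)).card := by
  classical
  set c1 := (q - 1).choose ℓ with hc1
  set c2 := (q - 1).choose (ℓ - 1) with hc2
  set E : Finset (Fin n) → Finset (Fin n → Finset (Fin q)) := fun T =>
    Fintype.piFinset (fun i =>
      if i ∈ T then ((Finset.univ : Finset (Fin q)).powersetCard ℓ).filter (fun s => x i ∉ s)
      else ((Finset.univ : Finset (Fin q)).powersetCard ℓ).filter (fun s => x i ∈ s)) with hE
  -- each E T has the right cardinality
  have hETcard : ∀ T ∈ Finset.univ.powersetCard m, (E T).card = c1 ^ m * c2 ^ (n - m) := by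
    intro T hT
    rw [Finset.mem_powersetCard] at hT
    rw [hE]
    rw [Fintype.card_piFinset]
    have : ∀ i : Fin n,
        (if i ∈ T then ((Finset.univ : Finset (Fin q)).powersetCard ℓ).filter (fun s => x i ∉ s)
         else ((Finset.univ : Finset (Fin q)).powersetCard ℓ).filter (fun s => x i ∈ s)).card
        = if i ∈ T then c1 else c2 := by
      intro i
      by_cases h : i ∈ T
      · simp only [h, if_true]; exact count_avoid q ℓ (x i)
      · simp only [h, if_false]; exact count_mem q ℓ hq hl (x i)
    rw [Finset.prod_congr rfl (fun i _ => this i)]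
    rw [Finset.prod_ite (fun _ => c1) (fun _ => c2), Finset.prod_const, Finset.prod_const,
      Finset.filter_univ_mem, hT.2, Finset.filter_not, Finset.filter_univ_mem,
      Finset.card_sdiff_of_subset (Finset.subset_univ T), Finset.card_univ, Fintype.card_fin, hT.2]
  -- membership characterization
  have hmemE : ∀ T, ∀ Y ∈ E T, ∀ i : Fin n,
      (Y i ∈ (Finset.univ : Finset (Fin q)).powersetCard ℓ) ∧ (x i ∉ Y i ↔ i ∈ T) := by
    intro T Y hY i
    have h := Fintype.mem_piFinset.mp hY i
    by_cases hi : i ∈ T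
    · simp only [hE, hi, if_true, Finset.mem_filter] at h
      exact ⟨h.1, by tauto⟩
    · simp only [hE, hi, if_false, Finset.mem_filter] at h
      exact ⟨h.1, by tauto⟩
  have hEsub : ∀ T ∈ Finset.univ.powersetCard m, E T ⊆
      (Fintype.piFinset (fun _ : Fin n => (Finset.univ : Finset (Fin q)).powersetCard ℓ)).filter
        (fun Y => (Finset.univ.filter fun i => x i ∉ Y i).card ≤ m) := by
    intro T hT Y hY
    rw [Finset.mem_powersetCard] at hT
    rw [Finset.mem_filter]
    constructor
    · exact Fintype.mem_piFinset.mpr (fun i => ((hmemE T Y hY i).1))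
    · have hTe : Finset.univ.filter (fun i => x i ∉ Y i) = T := by
        ext i
        simp only [Finset.mem_filter, Finset.mem_univ, true_and]
        exact (hmemE T Y hY i).2
      rw [hTe, hT.2]
  have hdisj : ∀ T₁ ∈ Finset.univ.powersetCard m, ∀ T₂ ∈ Finset.univ.powersetCard m,
      T₁ ≠ T₂ → Disjoint (E T₁) (E T₂) := by
    intro T₁ _ T₂ _ hne
    rw [Finset.disjoint_left]
    intro Y h1 h2
    apply hne
    ext i
    rw [← (hmemE T₁ Y h1 i).2, (hmemE T₂ Y h2 i).2]
  calc n.choose m * c1 ^ m * c2 ^ (n - m)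
      = ∑ T ∈ Finset.univ.powersetCard m, (E T).card := by
        rw [Finset.sum_congr rfl hETcard, Finset.sum_const, Finset.card_powersetCard,
          Finset.card_univ, Fintype.card_fin, smul_eq_mul]
        ring
    _ = ((Finset.univ.powersetCard m).biUnion E).card := (Finset.card_biUnion hdisj).symm
    _ ≤ _ := Finset.card_le_card (Finset.biUnion_subset.mpr hEsub)

/-- The list-recovery entropy
`H_{q,ℓ}(w) = w log_q((q−ℓ)/w) + (1−w) log_q(ℓ/(1−w))`. -/
noncomputable def Hql (q ℓ : ℕ) (w : ℝ) : ℝ :=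
  w * Real.logb q (((q : ℝ) - ℓ) / w) + (1 - w) * Real.logb q ((ℓ : ℝ) / (1 - w))

set_option maxHeartbeats 2000000 in
theorem stmt17 (q ℓ n m : ℕ) (hq : 2 ≤ q) (hl1 : 1 ≤ ℓ) (hlq : ℓ ≤ q - 1)
    (hm1 : 1 ≤ m) (hmn : m ≤ n - 1) :
    ∃ (K : ℕ) (Y : Fin K → Fin n → Finset (Fin q)),
      (∀ k i, (Y k i).card = ℓ) ∧
      (∀ x : Fin n → Fin q, ∃ k,
        (Finset.univ.filter fun i => x i ∉ Y k i).card ≤ m) ∧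
      (K : ℝ) ≤ (n : ℝ) * Real.log q *
          Real.sqrt (8 * n * ((m : ℝ) / n) * (1 - (m : ℝ) / n)) *
          (q : ℝ) ^ ((n : ℝ) * (1 - Hql q ℓ ((m : ℝ) / n))) + 1 := by
  classical
  have hn2 : 2 ≤ n := by omega
  have hmn' : m < n := by omega
  have hlq' : ℓ < q := by omega
  obtain ⟨b, hnb⟩ : ∃ b, n = m + b := ⟨n - m, by omega⟩
  have hb1 : 1 ≤ b := by omega
  have hnm : n - m = b := by omega
  set Nq := q.choose ℓ with hNq
  set c1 := (q - 1).choose ℓ with hc1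
  set c2 := (q - 1).choose (ℓ - 1) with hc2
  set g : ℕ := n.choose m * c1 ^ m * c2 ^ b with hg
  set A := Fintype.piFinset (fun _ : Fin n => (Finset.univ : Finset (Fin q)).powersetCard ℓ)
    with hA
  set N : ℕ := Nq ^ n with hN
  have hAcard : A.card = N := by
    rw [hA, Fintype.card_piFinset, hN]
    simp [Finset.card_powersetCard, hNq]
  set G : (Fin n → Fin q) → Finset (Fin n → Finset (Fin q)) := fun x =>
    A.filter (fun Y => (Finset.univ.filter fun i => x i ∉ Y i).card ≤ m) with hG
  have hGA : ∀ x, G x ⊆ A := fun x => Finset.filter_subset _ _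
  have hGcard : ∀ x, g ≤ (G x).card := by
    intro x
    have h := gcount q ℓ n m (by omega) hl1 hmn'.le x
    rw [hnm] at h
    exact h
  have hgN : g ≤ N := by
    have h1 := hGcard (fun _ => ⟨0, by omega⟩)
    have h2 := Finset.card_le_card (hGA (fun _ => ⟨0, by omega⟩))
    rw [hAcard] at h2
    omega
  have hgpos : 0 < g := by
    have h1 : 0 < n.choose m := Nat.choose_pos hmn'.le
    have h2 : 0 < c1 := Nat.choose_pos (by omega)
    have h3 : 0 < c2 := Nat.choose_pos (by omega)
    positivity
  have hNqpos : 0 < Nq := Nat.choose_pos hlq'.le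
  have hNpos : 0 < N := by rw [hN]; positivity
  -- real quantities
  have hnR : (0:ℝ) < n := by positivity
  have hqR : (0:ℝ) < q := by positivity
  have hq1 : (1:ℝ) < q := by exact_mod_cast hq.trans_lt' one_lt_two
  set w : ℝ := (m:ℝ)/n with hw
  have hw0 : 0 < w := by positivity
  have hw1 : w < 1 := by
    rw [hw, div_lt_one hnR]
    exact_mod_cast hmn'
  set p : ℝ := (g:ℝ)/(N:ℝ) with hp
  have hp0 : 0 < p := by positivity
  have hp1 : p ≤ 1 := by
    rw [hp, div_le_one (by positivity)]
    exact_mod_cast hgN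
  have hlogq : 0 < Real.log q := Real.log_pos hq1
  set K := ⌈((n:ℝ) * Real.log q) / p⌉₊ with hK
  have hKpos : 0 < K := Nat.ceil_pos.mpr (by positivity)
  have hKge : (n:ℝ) * Real.log q ≤ p * K := by
    have h := Nat.le_ceil (((n:ℝ) * Real.log q) / p)
    rw [div_le_iff₀ hp0] at h
    calc (n:ℝ) * Real.log q ≤ (K:ℝ) * p := h
      _ = p * K := by ring
  -- the probabilistic counting bound
  have hcast : ((N - g : ℕ):ℝ) = (N:ℝ) * (1 - p) := by
    rw [Nat.cast_sub hgN, hp]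
    field_simp
  have h1p : (1 - p)^K * (q:ℝ)^n < 1 := by
    rcases eq_or_lt_of_le hp1 with hp' | hp'
    · rw [hp', sub_self, zero_pow hKpos.ne', zero_mul]
      norm_num
    · have h1pn : (0:ℝ) ≤ 1 - p := by linarith
      have hlt : 1 - p < Real.exp (-p) := by
        have h := Real.add_one_lt_exp (x := -p) (by linarith)
        linarith
      have hpow : (1 - p)^K < Real.exp (-p) ^ K :=
        pow_lt_pow_left₀ hlt h1pn hKpos.ne'
      have hexpK : Real.exp (-p) ^ K = Real.exp (-(p * K)) := by
        rw [← Real.exp_nat_mul]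
        ring_nf
      have hle : Real.exp (-(p * K)) ≤ Real.exp (-((n:ℝ) * Real.log q)) :=
        Real.exp_le_exp.mpr (by linarith)
      have hqn : Real.exp (-((n:ℝ) * Real.log q)) * (q:ℝ)^n = 1 := by
        rw [Real.exp_neg, Real.exp_nat_mul, Real.exp_log hqR]
        exact inv_mul_cancel₀ (by positivity)
      have hfin : (1 - p)^K * (q:ℝ)^n < Real.exp (-((n:ℝ) * Real.log q)) * (q:ℝ)^n := by
        apply mul_lt_mul_of_pos_right _ (by positivity)
        calc (1 - p)^K < Real.exp (-p) ^ K := hpow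
          _ = Real.exp (-(p * K)) := hexpK
          _ ≤ Real.exp (-((n:ℝ) * Real.log q)) := hle
      rw [hqn] at hfin
      exact hfin
  have hnatlt : Fintype.card (Fin n → Fin q) * (N - g)^K < A.card ^ K := by
    rw [hAcard]
    have hXcard : Fintype.card (Fin n → Fin q) = q ^ n := by simp
    rw [hXcard]
    have hreal : ((q:ℝ))^n * ((N:ℝ) - (g:ℝ))^K < ((N:ℝ))^K := by
      have hNg_eq : (N:ℝ) - g = (N:ℝ) * (1 - p) := by
        rw [hp]; field_simp
      rw [hNg_eq, mul_pow]
      calc (q:ℝ)^n * ((N:ℝ)^K * (1 - p)^K) = (N:ℝ)^K * ((1 - p)^K * (q:ℝ)^n) := by ring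
        _ < (N:ℝ)^K * 1 := by
            apply mul_lt_mul_of_pos_left h1p (by positivity)
        _ = (N:ℝ)^K := by ring
    refine (Nat.cast_lt (α := ℝ)).mp ?_
    push_cast [Nat.cast_sub hgN]
    exact hreal
  obtain ⟨f, hfA, hfcov⟩ := cover_lemma A G hGA K (N - g)
    (fun x => by
      have h1 := hGcard x
      have h2 : A.card = N := by rw [hAcard, hN]
      omega) hnatlt
  refine ⟨K, fun k => f k, ?_, ?_, ?_⟩
  · intro k i
    have h := Fintype.mem_piFinset.mp (hfA k) i
    exact (Finset.mem_powersetCard.mp h).2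
  · intro x
    obtain ⟨k, hk⟩ := hfcov x
    exact ⟨k, (Finset.mem_filter.mp hk).2⟩
  · -- the numerical bound on K
    have hbR : (b:ℝ) = (n:ℝ) - m := by
      have h : ((n:ℕ):ℝ) = ((m:ℕ):ℝ) + b := by exact_mod_cast congrArg (Nat.cast : ℕ → ℝ) hnb
      linarith
    have hKle : (K:ℝ) ≤ (n:ℝ) * Real.log q / p + 1 :=
      (Nat.ceil_lt_add_one (by positivity)).le
    have hqml : (0:ℝ) < (q:ℝ) - ℓ := by
      have h : (ℓ:ℝ) < q := by exact_mod_cast hlq'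
      linarith
    have hlR : (0:ℝ) < (ℓ:ℝ) := by
      have h : (1:ℝ) ≤ ℓ := by exact_mod_cast hl1
      linarith
    have h1w : (0:ℝ) < 1 - w := by linarith
    have hchpos : (0:ℝ) < (n.choose m : ℝ) := by exact_mod_cast Nat.choose_pos hmn'.le
    -- real identities for c1, c2
    have hid2 : (q:ℝ) * c2 = (Nq:ℝ) * ℓ := by
      have h := Nat.add_one_mul_choose_eq (q-1) (ℓ-1)
      rw [show q - 1 + 1 = q by omega, show ℓ - 1 + 1 = ℓ by omega] at h
      exact_mod_cast congrArg (Nat.cast : ℕ → ℝ) h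
    have hpas : Nq = c2 + c1 := by
      have h := Nat.choose_succ_succ (q-1) (ℓ-1)
      simp only [Nat.succ_eq_add_one] at h
      rw [show q - 1 + 1 = q by omega, show ℓ - 1 + 1 = ℓ by omega] at h
      exact h
    have hc2R : (c2:ℝ) = (ℓ:ℝ)/q * Nq := by
      field_simp
      linarith [hid2]
    have hc1R : (c1:ℝ) = ((q:ℝ)-ℓ)/q * Nq := by
      have h : ((Nq:ℕ):ℝ) = ((c2:ℕ):ℝ) + c1 := by exact_mod_cast congrArg (Nat.cast : ℕ → ℝ) hpas
      rw [show (c1:ℝ) = (Nq:ℝ) - c2 from by linarith, hc2R]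
      field_simp
    have hqpow : ((q:ℝ))^n = (q:ℝ)^m * (q:ℝ)^b := by rw [show n = m + b from hnb, pow_add]
    have hNqpow : ((Nq:ℝ))^n = (Nq:ℝ)^m * (Nq:ℝ)^b := by rw [show n = m + b from hnb, pow_add]
    have hNqR : (0:ℝ) < (Nq:ℝ) := by exact_mod_cast hNqpos
    have hgR : (g:ℝ) = (n.choose m : ℝ) * ((q:ℝ)-ℓ)^m * (ℓ:ℝ)^b * (Nq:ℝ)^n / (q:ℝ)^n := by
      have h : (g:ℝ) = (n.choose m:ℝ) * (c1:ℝ)^m * (c2:ℝ)^b := by rw [hg]; push_cast; ring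
      rw [h, hc1R, hc2R, mul_pow, mul_pow, div_pow, div_pow, hqpow, hNqpow]
      field_simp
    have hNR : (N:ℝ) = (Nq:ℝ)^n := by rw [hN]; push_cast; ring
    have hp_inv : 1/p = (q:ℝ)^n / ((n.choose m:ℝ) * ((q:ℝ)-ℓ)^m * (ℓ:ℝ)^b) := by
      rw [hp, one_div_div, hNR, hgR]
      rw [div_div_eq_mul_div]
      rw [div_eq_div_iff (by positivity) (by positivity)]
      ring
    -- the rpow identity
    have hHlog : Hql q ℓ w * Real.log q
        = w * Real.log (((q:ℝ)-ℓ)/w) + (1-w) * Real.log ((ℓ:ℝ)/(1-w)) := by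
      simp only [Hql, Real.logb]
      field_simp
    have hnw : (n:ℝ) * w = m := by rw [hw]; field_simp
    have hnw1 : (n:ℝ) * (1 - w) = b := by
      rw [hw, mul_sub, mul_one, mul_div_cancel₀ _ hnR.ne']
      linarith
    have hQ : (q:ℝ)^((n:ℝ)*(1 - Hql q ℓ w))
        = (q:ℝ)^n * w^m * (1-w)^b / (((q:ℝ)-ℓ)^m * (ℓ:ℝ)^b) := by
      rw [Real.rpow_def_of_pos hqR]
      have hexp_eq : Real.log q * ((n:ℝ)*(1 - Hql q ℓ w))
          = (n:ℝ)*Real.log q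
            - ((m:ℝ) * Real.log (((q:ℝ)-ℓ)/w) + (b:ℝ) * Real.log ((ℓ:ℝ)/(1-w))) := by
        linear_combination (-(n:ℝ)) * hHlog - Real.log (((q:ℝ)-ℓ)/w) * hnw
          - Real.log ((ℓ:ℝ)/(1-w)) * hnw1
      rw [hexp_eq, Real.exp_sub, Real.exp_add, Real.exp_nat_mul, Real.exp_nat_mul,
        Real.exp_nat_mul, Real.exp_log hqR, Real.exp_log (div_pos hqml hw0),
        Real.exp_log (div_pos hlR h1w), div_pow, div_pow]
      field_simp
      ring
      rw [inv_pow, mul_assoc, inv_mul_cancel₀ (pow_ne_zero _ h1w.ne'), mul_one]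
    -- the binomial bound
    have hw1b : 1 - w = (b:ℝ)/(n:ℝ) := by
      rw [eq_div_iff hnR.ne']
      linear_combination hnw1
    have hsarg : 8*(n:ℝ)*w*(1-w) = 8*(m:ℝ)*b/(n:ℝ) := by
      calc 8*(n:ℝ)*w*(1-w) = 8*((n:ℝ)*w)*(1-w) := by ring
        _ = 8*(m:ℝ)*((b:ℝ)/(n:ℝ)) := by rw [hnw, hw1b]
        _ = 8*(m:ℝ)*b/(n:ℝ) := by ring
    have hbk := binom_key m b hm1 hb1
    have hmbn : ((m:ℝ) + b) = (n:ℝ) := by linarith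
    rw [hmbn, show m + b = n from hnb.symm] at hbk
    have key : 1 ≤ Real.sqrt (8*(m:ℝ)*b/(n:ℝ)) * (n.choose m:ℝ) * (w^m * (1-w)^b) := by
      have hwm : w^m = (m:ℝ)^m/(n:ℝ)^m := by rw [hw, div_pow]
      have hwb : (1-w)^b = (b:ℝ)^b/(n:ℝ)^b := by
        rw [hw1b, div_pow]
      have hnn : ((n:ℝ))^m * (n:ℝ)^b = (n:ℝ)^n := by rw [← pow_add, ← hnb]
      rw [hwm, hwb]
      calc (1:ℝ) = (n:ℝ)^n/(n:ℝ)^n := by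
            rw [div_self (by positivity)]
        _ ≤ (Real.sqrt (8*(m:ℝ)*b/(n:ℝ)) * (n.choose m:ℝ) * (m:ℝ)^m * (b:ℝ)^b)/(n:ℝ)^n :=
            (div_le_div_iff_of_pos_right (by positivity)).mpr hbk
        _ = Real.sqrt (8*(m:ℝ)*b/(n:ℝ)) * (n.choose m:ℝ) * ((m:ℝ)^m/(n:ℝ)^m * ((b:ℝ)^b/(n:ℝ)^b)) := by
            rw [← hnn]
            field_simp
    have hmain2 : 1/p ≤ Real.sqrt (8*(n:ℝ)*w*(1-w)) * (q:ℝ)^((n:ℝ)*(1 - Hql q ℓ w)) := by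
      rw [hp_inv, hQ, show Real.sqrt (8*(n:ℝ)*w*(1-w)) = Real.sqrt (8*(m:ℝ)*b/(n:ℝ)) from by
        rw [hsarg]]
      have hre : Real.sqrt (8*(m:ℝ)*b/(n:ℝ)) *
            ((q:ℝ)^n * w^m * (1-w)^b/(((q:ℝ)-ℓ)^m * (ℓ:ℝ)^b))
          = (Real.sqrt (8*(m:ℝ)*b/(n:ℝ)) * (n.choose m:ℝ) * (w^m * (1-w)^b))
            * ((q:ℝ)^n/((n.choose m:ℝ) * ((q:ℝ)-ℓ)^m * (ℓ:ℝ)^b)) := by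
        field_simp
      rw [hre]
      have hD : (0:ℝ) < (q:ℝ)^n/((n.choose m:ℝ) * ((q:ℝ)-ℓ)^m * (ℓ:ℝ)^b) :=
        div_pos (by positivity) (by positivity)
      exact le_mul_of_one_le_left hD.le key
    calc (K:ℝ) ≤ (n:ℝ) * Real.log q / p + 1 := hKle
      _ = (n:ℝ) * Real.log q * (1/p) + 1 := by ring
      _ ≤ (n:ℝ) * Real.log q *
            (Real.sqrt (8*(n:ℝ)*w*(1-w)) * (q:ℝ)^((n:ℝ)*(1 - Hql q ℓ w))) + 1 := by
          have := mul_le_mul_of_nonneg_left hmain2 (by positivity : (0:ℝ) ≤ (n:ℝ) * Real.log q)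
          linarith
      _ = (n:ℝ) * Real.log q * Real.sqrt (8*(n:ℝ)*w*(1-w)) *
            (q:ℝ)^((n:ℝ)*(1 - Hql q ℓ w)) + 1 := by ring
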